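/- For all nonnegative integers n, √((2n+1)(2n+4)) ≤ (2n + 5/2) − (9/8)/(2n + 5/2) − (81/128)/(2n + 5/2)³. -/

import Mathlib

/-- The overestimation of the square root term in `K_{(3,0)}`:
`√((2n+1)(2n+4)) ≤ (2n+5/2) − (9/8)/(2n+5/2) − (81/128)/(2n+5/2)³`. -/
theorem stmt_8 (n : ℕ) :
    Real.sqrt ((2 * (n : ℝ) + 1) * (2 * (n : ℝ) + 4)) ≤
      (2 * (n : ℝ) + 5 / 2) - (9 / 8) / (2 * (n : ℝ) + 5 / 2)
        - (81 / 128) / (2 * (n : ℝ) + 5 / 2) ^ 3 := by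
  have hn : (0:ℝ) ≤ (n:ℝ) := Nat.cast_nonneg n
  set x : ℝ := 2 * (n:ℝ) + 5/2 with hxdef
  have hx5 : (5/2:ℝ) ≤ x := by rw [hxdef]; linarith
  have hxpos : (0:ℝ) < x := lt_of_lt_of_le (by norm_num) hx5
  have hx3 : (0:ℝ) < x ^ 3 := by positivity
  have hR : 0 ≤ x - 9/8/x - 81/128/x^3 := by
    have h1 : 9/8/x ≤ 9/8/(5/2) :=
      div_le_div_of_nonneg_left (by norm_num) (by norm_num) hx5
    have h2 : 81/128/x^3 ≤ 81/128/((5/2:ℝ)^3) :=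
      div_le_div_of_nonneg_left (by norm_num) (by norm_num)
        (pow_le_pow_left₀ (by norm_num) hx5 3)
    nlinarith
  rw [show (2 * (n:ℝ) + 1) * (2 * (n:ℝ) + 4) = (x - 3/2) * (x + 3/2) by
    rw [hxdef]; ring]
  have key : (x - 3/2) * (x + 3/2) ≤ (x - 9/8/x - 81/128/x^3)^2 := by
    have h : (x - 9/8/x - 81/128/x^3)^2 = ((x^4 - 9/8*x^2 - 81/128)/x^3)^2 := by
      congr 1
      field_simp
    rw [h, div_pow, le_div_iff₀ (by positivity)]
    nlinarith [sq_nonneg x, pow_pos hxpos 2, pow_pos hxpos 6]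
  calc Real.sqrt ((x - 3/2) * (x + 3/2)) ≤ Real.sqrt ((x - 9/8/x - 81/128/x^3)^2) :=
        Real.sqrt_le_sqrt key
    _ = x - 9/8/x - 81/128/x^3 := Real.sqrt_sq hR
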